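/- Let T > 0, and let Γ : [0,T] × ℝ^d → ℝ^d satisfy, for all 0 ≤ s < t ≤ T and x, y ∈ ℝ^d: |Γ_{s,t}(x)| ≤ C|t−s|^γ and |Γ_{s,t}(x) − Γ_{s,t}(y)| ≤ C|t−s|^γ |x−y|, with γ ∈ (1/2, 1). Let β > 0 with γ + β > 1, let (μ_t)_{t∈[0,T]} be a β-Hölder flow of probability measures on ℝ^d with finite first moments, and let Y ∈ C^β([0,T];ℝ^d). Then the Riemann sums Σ_{[u,v]∈D} (Γ_{u,v} ∗ μ_u)(Y_u) over partitions D of [0,t] converge as the mesh |D| → 0 to a limit ∫_0^t (Γ_{dr} ∗ μ_r)(Y_r), and for all s < t: |∫_s^t (Γ_{dr} ∗ μ_r)(Y_r) − (Γ_{s,t} ∗ μ_s)(Y_s)| ≤ C' |t−s|^{γ+β} ([Y]_β + [μ]_β), where C' depends only on γ, β and the bounds on Γ. -/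

import Mathlib

open MeasureTheory Set

noncomputable section

abbrev Ed (d : ℕ) := EuclideanSpace ℝ (Fin d)

/-- `I` is the limit of Riemann sums `Σ_{[u,v] ∈ D} Ξ_{u,v}` along partitions `D` of `[s,t]`
as the mesh tends to `0`. -/
def IsRiemannLimit {E : Type*} [NormedAddCommGroup E]
    (Ξ : ℝ → ℝ → E) (s t : ℝ) (I : E) : Prop :=
  ∀ ε > (0:ℝ), ∃ δ > (0:ℝ), ∀ n : ℕ, ∀ σ : Fin (n + 1) → ℝ,
    Monotone σ → σ 0 = s → σ (Fin.last n) = t →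
    (∀ i : Fin n, σ i.succ - σ i.castSucc < δ) →
    ‖(∑ i : Fin n, Ξ (σ i.castSucc) (σ i.succ)) - I‖ < ε

/-- Convolution of the time increment `Γ_{s,t}` against a measure: `(Γ_{s,t} ∗ m)(x)`. -/
def convInc {d : ℕ} (Γ : ℝ → Ed d → Ed d) (s t : ℝ) (m : Measure (Ed d)) (x : Ed d) : Ed d :=
  ∫ y, (Γ t (x - y) - Γ s (x - y)) ∂m

open Finset Filter Topology

/-- The sewing constant. -/
def sewK (e : ℝ) : ℝ := 2 ^ e * ∑' k : ℕ, ((k : ℝ) + 1) ^ (-e)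

lemma sewSummable {e : ℝ} (he : 1 < e) : Summable (fun k : ℕ => ((k : ℝ) + 1) ^ (-e)) := by
  have h : Summable (fun n : ℕ => (n : ℝ) ^ (-e)) :=
    (Real.summable_nat_rpow).mpr (by linarith)
  have h2 := h.comp_injective (add_left_injective 1)
  refine h2.congr fun k => ?_
  simp [Function.comp]

lemma sewK_pos {e : ℝ} (he : 1 < e) : 0 < sewK e := by
  have h1 : (0:ℝ) < ((0 : ℝ) + 1) ^ (-e) := by positivity
  have h2 : (0:ℝ) < ∑' k : ℕ, ((k : ℝ) + 1) ^ (-e) :=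
    Summable.tsum_pos (sewSummable he) (fun k => by positivity) 0 (by simp only [Nat.cast_zero]; exact h1)
  unfold sewK; positivity

section Abstract

variable {E : Type*} [NormedAddCommGroup E] [NormedSpace ℝ E] [CompleteSpace E]
variable (Ξ : ℝ → ℝ → E)

/-- Riemann sum. -/
def RS (p : ℕ → ℝ) (n : ℕ) : E := ∑ k ∈ Finset.range n, Ξ (p k) (p (k+1))

variable {a b L e : ℝ}


lemma lemA (he : 1 < e) (hL : 0 ≤ L) (hzero : ∀ u, Ξ u u = 0)
    (hδ : ∀ s u t, a ≤ s → s ≤ u → u ≤ t → t ≤ b →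
      ‖Ξ s t - Ξ s u - Ξ u t‖ ≤ L * (t - s) ^ e) :
    ∀ n (p : ℕ → ℝ), Monotone p → a ≤ p 0 → p n ≤ b →
      ‖RS Ξ p n - Ξ (p 0) (p n)‖
        ≤ L * (2 * (p n - p 0)) ^ e * ∑ k ∈ range (n-1), ((k : ℝ) + 1) ^ (-e) := by
  intro n
  induction n using Nat.strong_induction_on with
  | _ n IH =>
  match n with
  | 0 => intro p hp h0 hb'
         simp [RS, hzero]
  | 1 => intro p hp h0 hb'
         have : RS Ξ p 1 = Ξ (p 0) (p 1) := by simp [RS]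
         rw [this, sub_self, norm_zero]
         have hA : (0:ℝ) ≤ 2 * (p 1 - p 0) := by
           have := hp (Nat.zero_le 1); linarith
         positivity
  | (N+2) =>
    intro p hp h0 hb'
    set n := N + 2 with hn
    set A := p n - p 0 with hA
    have hA0 : (0:ℝ) ≤ A := by have := hp (Nat.zero_le n); simp [hA]; linarith
    -- find a point with small surrounding gap
    have hex : ∃ j ∈ range (N+1), p (j+2) - p j ≤ 2*A/(N+1) := by
      by_contra hcon
      push_neg at hcon
      have hlt : ∑ j ∈ range (N+1), (2*A/(N+1) : ℝ)
          < ∑ j ∈ range (N+1), (p (j+2) - p j) :=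
        Finset.sum_lt_sum_of_nonempty (by simp) hcon
      have h1 : ∑ j ∈ range (N+1), (p (j+2) - p j)
          = (p (N+2) - p 1) + (p (N+1) - p 0) := by
        have e1 : ∑ j ∈ range (N+1), (p (j+2) - p j)
            = ∑ j ∈ range (N+1), ((p (j+2) - p (j+1)) + (p (j+1) - p j)) := by
          apply Finset.sum_congr rfl; intro k _; ring
        rw [e1, Finset.sum_add_distrib]
        rw [show (∑ j ∈ range (N+1), (p (j+2) - p (j+1)))
            = ∑ j ∈ range (N+1), ((fun k => p (k+1)) (j+1) - (fun k => p (k+1)) j) from rfl]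
        rw [Finset.sum_range_sub (fun k => p (k+1)), Finset.sum_range_sub p]
      have h2 : ∑ j ∈ range (N+1), (2*A/(N+1) : ℝ) = 2*A := by
        rw [Finset.sum_const, Finset.card_range, nsmul_eq_mul]
        field_simp
        push_cast; ring
      have hle : (p (N+2) - p 1) + (p (N+1) - p 0) ≤ 2*A := by
        have g1 : p 0 ≤ p 1 := hp (by omega)
        have g2 : p (N+1) ≤ p (N+2) := hp (by omega)
        simp only [hA, hn]; linarith
      rw [h1, h2] at hlt
      linarith
    obtain ⟨j, hjm, hj⟩ := hex
    rw [Finset.mem_range] at hjm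
    set p' : ℕ → ℝ := fun k => if k < j+1 then p k else p (k+1) with hp'
    have hp'mono : Monotone p' := by
      apply monotone_nat_of_le_succ
      intro k
      simp only [hp']
      split <;> split <;> (try exact hp (by omega)) <;> omega
    have hp'0 : p' 0 = p 0 := by simp [hp']
    have hp'last : p' (N+1) = p (N+2) := by
      simp only [hp']
      rw [if_neg (by omega)]
    -- sum identity
    have hgsplit : RS Ξ p n = (∑ k ∈ range j, Ξ (p k) (p (k+1)))
        + Ξ (p j) (p (j+1)) + Ξ (p (j+1)) (p (j+2))
        + ∑ k ∈ Finset.Ico (j+2) (N+2), Ξ (p k) (p (k+1)) := by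
      have e1 : (∑ k ∈ Finset.Ico 0 (j+2), Ξ (p k) (p (k+1)))
          + ∑ k ∈ Finset.Ico (j+2) (N+2), Ξ (p k) (p (k+1))
          = ∑ k ∈ Finset.Ico 0 (N+2), Ξ (p k) (p (k+1)) :=
        Finset.sum_Ico_consecutive _ (by omega) (by omega)
      have e2 : ∑ k ∈ Finset.Ico 0 (j+2), Ξ (p k) (p (k+1))
          = (∑ k ∈ range j, Ξ (p k) (p (k+1))) + Ξ (p j) (p (j+1)) + Ξ (p (j+1)) (p (j+2)) := by
        rw [← Finset.range_eq_Ico, Finset.sum_range_succ, Finset.sum_range_succ]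
      rw [RS, Finset.range_eq_Ico, ← e1, e2, Finset.range_eq_Ico]
    have hg'split : RS Ξ p' (N+1) = (∑ k ∈ range j, Ξ (p k) (p (k+1)))
        + Ξ (p j) (p (j+2))
        + ∑ k ∈ Finset.Ico (j+2) (N+2), Ξ (p k) (p (k+1)) := by
      have e1 : (∑ k ∈ Finset.Ico 0 (j+1), Ξ (p' k) (p' (k+1)))
          + ∑ k ∈ Finset.Ico (j+1) (N+1), Ξ (p' k) (p' (k+1))
          = ∑ k ∈ Finset.Ico 0 (N+1), Ξ (p' k) (p' (k+1)) :=
        Finset.sum_Ico_consecutive _ (by omega) (by omega)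
      have e2 : ∑ k ∈ Finset.Ico 0 (j+1), Ξ (p' k) (p' (k+1))
          = (∑ k ∈ range j, Ξ (p k) (p (k+1))) + Ξ (p j) (p (j+2)) := by
        rw [← Finset.range_eq_Ico, Finset.sum_range_succ]
        congr 1
        · apply Finset.sum_congr rfl
          intro k hk
          rw [Finset.mem_range] at hk
          simp only [hp']
          rw [if_pos (by omega), if_pos (by omega)]
        · simp only [hp']
          rw [if_pos (by omega), if_neg (by omega)]
      have e3 : ∑ k ∈ Finset.Ico (j+1) (N+1), Ξ (p' k) (p' (k+1))
          = ∑ k ∈ Finset.Ico (j+2) (N+2), Ξ (p k) (p (k+1)) := by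
        rw [Finset.sum_Ico_eq_sum_range, Finset.sum_Ico_eq_sum_range]
        have hc : N+1 - (j+1) = N+2 - (j+2) := by omega
        rw [hc]
        apply Finset.sum_congr rfl
        intro k _
        simp only [hp']
        rw [if_neg (by omega), if_neg (by omega)]
        congr 2 <;> omega
      rw [RS, Finset.range_eq_Ico, ← e1, e2, e3, Finset.range_eq_Ico]
    -- apply induction hypothesis and the local estimate
    have hIH := IH (N+1) (by omega) p' hp'mono (by rw [hp'0]; exact h0)
      (by rw [hp'last]; exact hb')
    have hδ' : ‖Ξ (p j) (p (j+1)) + Ξ (p (j+1)) (p (j+2)) - Ξ (p j) (p (j+2))‖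
        ≤ L * (2*A)^e * ((N:ℝ)+1)^(-e) := by
      have h1 := hδ (p j) (p (j+1)) (p (j+2))
        (le_trans h0 (hp (Nat.zero_le j))) (hp (by omega)) (hp (by omega))
        (le_trans (hp (by omega)) hb')
      have h2 : ‖Ξ (p j) (p (j+1)) + Ξ (p (j+1)) (p (j+2)) - Ξ (p j) (p (j+2))‖
          = ‖Ξ (p j) (p (j+2)) - Ξ (p j) (p (j+1)) - Ξ (p (j+1)) (p (j+2))‖ := by
        rw [← norm_neg]; congr 1; abel
      rw [h2]
      refine h1.trans ?_
      have hnn : (0:ℝ) ≤ p (j+2) - p j := by have := hp (show j ≤ j+2 by omega); linarith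
      have h3 : (p (j+2) - p j)^e ≤ (2*A/(N+1))^e :=
        Real.rpow_le_rpow hnn hj (by linarith)
      have h4 : ((2*A/(N+1)):ℝ)^e = (2*A)^e * ((N:ℝ)+1)^(-e) := by
        rw [Real.div_rpow (by linarith) (by positivity), Real.rpow_neg (by positivity)]
        push_cast
        ring
      calc L * (p (j+2) - p j)^e ≤ L * (2*A/(N+1))^e := by
            apply mul_le_mul_of_nonneg_left h3 hL
        _ = L * ((2*A)^e * ((N:ℝ)+1)^(-e)) := by rw [h4]
        _ = L * (2*A)^e * ((N:ℝ)+1)^(-e) := by ring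
    have hkey : RS Ξ p n - Ξ (p 0) (p n)
        = (RS Ξ p' (N+1) - Ξ (p' 0) (p' (N+1)))
          + (Ξ (p j) (p (j+1)) + Ξ (p (j+1)) (p (j+2)) - Ξ (p j) (p (j+2))) := by
      rw [hgsplit, hg'split, hp'0, hp'last]
      abel
    rw [hkey]
    have hsum : ∑ k ∈ range (n-1), ((k : ℝ) + 1) ^ (-e)
        = (∑ k ∈ range N, ((k : ℝ) + 1) ^ (-e)) + ((N:ℝ)+1)^(-e) := by
      have : n - 1 = N + 1 := by omega
      rw [this, Finset.sum_range_succ]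
    calc ‖(RS Ξ p' (N+1) - Ξ (p' 0) (p' (N+1)))
          + (Ξ (p j) (p (j+1)) + Ξ (p (j+1)) (p (j+2)) - Ξ (p j) (p (j+2)))‖
        ≤ ‖RS Ξ p' (N+1) - Ξ (p' 0) (p' (N+1))‖
          + ‖Ξ (p j) (p (j+1)) + Ξ (p (j+1)) (p (j+2)) - Ξ (p j) (p (j+2))‖ := norm_add_le _ _
      _ ≤ L * (2 * (p' (N+1) - p' 0)) ^ e * (∑ k ∈ range ((N+1)-1), ((k : ℝ) + 1) ^ (-e))
          + L * (2*A)^e * ((N:ℝ)+1)^(-e) := add_le_add hIH hδ'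
      _ = L * (2*A)^e * ((∑ k ∈ range N, ((k : ℝ) + 1) ^ (-e)) + ((N:ℝ)+1)^(-e)) := by
          rw [hp'0, hp'last]
          have : (N+1) - 1 = N := by omega
          rw [this]
          simp only [hA, hn]
          ring
      _ = L * (2 * A) ^ e * ∑ k ∈ range (n-1), ((k : ℝ) + 1) ^ (-e) := by rw [hsum]
      _ = L * (2 * (p n - p 0)) ^ e * ∑ k ∈ range (n-1), ((k : ℝ) + 1) ^ (-e) := by rw [hA]


lemma lemA' (he : 1 < e) (hL : 0 ≤ L) (hzero : ∀ u, Ξ u u = 0)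
    (hδ : ∀ s u t, a ≤ s → s ≤ u → u ≤ t → t ≤ b →
      ‖Ξ s t - Ξ s u - Ξ u t‖ ≤ L * (t - s) ^ e)
    (n : ℕ) (p : ℕ → ℝ) (hp : Monotone p) (h0 : a ≤ p 0) (hb' : p n ≤ b) :
    ‖RS Ξ p n - Ξ (p 0) (p n)‖ ≤ L * sewK e * (p n - p 0) ^ e := by
  have h := lemA Ξ he hL hzero hδ n p hp h0 hb'
  refine h.trans ?_
  have hΔ : (0:ℝ) ≤ p n - p 0 := by have := hp (Nat.zero_le n); linarith
  have h2 : (2 * (p n - p 0)) ^ e = 2^e * (p n - p 0)^e :=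
    Real.mul_rpow (by norm_num) hΔ
  have hHS : ∑ k ∈ range (n-1), ((k : ℝ) + 1) ^ (-e)
      ≤ ∑' k : ℕ, ((k : ℝ) + 1) ^ (-e) :=
    Summable.sum_le_tsum _ (fun k _ => by positivity) (sewSummable he)
  have hnn : (0:ℝ) ≤ L * (2^e * (p n - p 0)^e) := by positivity
  calc L * (2 * (p n - p 0)) ^ e * ∑ k ∈ range (n-1), ((k : ℝ) + 1) ^ (-e)
      = L * (2^e * (p n - p 0)^e) * ∑ k ∈ range (n-1), ((k : ℝ) + 1) ^ (-e) := by rw [h2]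
    _ ≤ L * (2^e * (p n - p 0)^e) * ∑' k : ℕ, ((k : ℝ) + 1) ^ (-e) :=
        mul_le_mul_of_nonneg_left hHS hnn
    _ = L * sewK e * (p n - p 0) ^ e := by rw [sewK]; ring

lemma rpow_le_mul {e x M : ℝ} (he : 1 < e) (hx : 0 ≤ x) (hxM : x ≤ M) :
    x ^ e ≤ M ^ (e-1) * x := by
  have h1 : x ^ e = x ^ (e-1) * x := by
    calc x ^ e = x ^ ((e-1) + 1) := by norm_num
      _ = x ^ (e-1) * x ^ (1:ℝ) := Real.rpow_add' hx (by intro h; linarith)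
      _ = x ^ (e-1) * x := by rw [Real.rpow_one]
  rw [h1]
  exact mul_le_mul_of_nonneg_right (Real.rpow_le_rpow hx hxM (by linarith)) hx

lemma lemB (he : 1 < e) (hL : 0 ≤ L) (hzero : ∀ u, Ξ u u = 0)
    (hδ : ∀ s u t, a ≤ s → s ≤ u → u ≤ t → t ≤ b →
      ‖Ξ s t - Ξ s u - Ξ u t‖ ≤ L * (t - s) ^ e)
    (n : ℕ) (f : ℕ → ℕ) (hf : Monotone f) (hf0 : f 0 = 0)
    (r : ℕ → ℝ) (hr : Monotone r) (ha : a ≤ r 0) (hb2 : r (f n) ≤ b)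
    (M : ℝ) (hM : 0 ≤ M) (hmesh : ∀ i, i < n → r (f (i+1)) - r (f i) ≤ M) :
    ‖RS Ξ r (f n) - ∑ i ∈ range n, Ξ (r (f i)) (r (f (i+1)))‖
      ≤ L * sewK e * M^(e-1) * (r (f n) - r 0) := by
  have hsplit : ∀ m : ℕ, RS Ξ r (f m)
      = ∑ i ∈ range m, ∑ k ∈ Finset.Ico (f i) (f (i+1)), Ξ (r k) (r (k+1)) := by
    intro m
    induction m with
    | zero => simp [RS, hf0]
    | succ m IH =>
      rw [Finset.sum_range_succ, ← IH, RS, RS, Finset.range_eq_Ico,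
        ← Finset.sum_Ico_consecutive (fun k => Ξ (r k) (r (k+1)))
          (Nat.zero_le (f m)) (hf (Nat.le_succ m))]
      rw [Finset.range_eq_Ico]
  rw [hsplit n, ← Finset.sum_sub_distrib]
  refine (norm_sum_le _ _).trans ?_
  have hblock : ∀ i, i < n →
      ‖(∑ k ∈ Finset.Ico (f i) (f (i+1)), Ξ (r k) (r (k+1))) - Ξ (r (f i)) (r (f (i+1)))‖
        ≤ L * sewK e * M^(e-1) * (r (f (i+1)) - r (f i)) := by
    intro i hi
    have hfi : f i ≤ f (i+1) := hf (Nat.le_succ i)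
    set q : ℕ → ℝ := fun k => r (min (f i + k) (f (i+1))) with hq
    have hq0 : q 0 = r (f i) := by simp [hq, Nat.min_eq_left hfi]
    have hqn : q (f (i+1) - f i) = r (f (i+1)) := by
      simp [hq, Nat.add_sub_cancel' hfi]
    have hqmono : Monotone q := by
      intro x y hxy
      exact hr (min_le_min (by omega) le_rfl)
    have hsum : ∑ k ∈ Finset.Ico (f i) (f (i+1)), Ξ (r k) (r (k+1))
        = RS Ξ q (f (i+1) - f i) := by
      rw [Finset.sum_Ico_eq_sum_range, RS]
      apply Finset.sum_congr rfl
      intro k hk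
      rw [Finset.mem_range] at hk
      simp only [hq]
      rw [Nat.min_eq_left (by omega), Nat.min_eq_left (by omega), Nat.add_assoc]
    have hA := lemA' Ξ he hL hzero hδ (f (i+1) - f i) q hqmono
      (by rw [hq0]; exact le_trans ha (hr (Nat.zero_le _)))
      (by rw [hqn]; exact le_trans (hr (hf (by omega))) hb2)
    rw [hq0, hqn] at hA
    rw [hsum]
    refine hA.trans ?_
    have hΔ : (0:ℝ) ≤ r (f (i+1)) - r (f i) := by
      have := hr hfi; linarith
    have := rpow_le_mul he hΔ (hmesh i hi)
    calc L * sewK e * (r (f (i+1)) - r (f i)) ^ e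
        ≤ L * sewK e * (M^(e-1) * (r (f (i+1)) - r (f i))) := by
          apply mul_le_mul_of_nonneg_left this
          have := sewK_pos he
          positivity
      _ = L * sewK e * M^(e-1) * (r (f (i+1)) - r (f i)) := by ring
  calc ∑ i ∈ range n,
        ‖(∑ k ∈ Finset.Ico (f i) (f (i+1)), Ξ (r k) (r (k+1))) - Ξ (r (f i)) (r (f (i+1)))‖
      ≤ ∑ i ∈ range n, L * sewK e * M^(e-1) * (r (f (i+1)) - r (f i)) := by
        apply Finset.sum_le_sum
        intro i hi
        exact hblock i (Finset.mem_range.mp hi)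
    _ = L * sewK e * M^(e-1) * ∑ i ∈ range n, (r (f (i+1)) - r (f i)) := by
        rw [← Finset.mul_sum]
    _ = L * sewK e * M^(e-1) * (r (f n) - r 0) := by
        rw [show (∑ i ∈ range n, (r (f (i+1)) - r (f i)))
            = ∑ i ∈ range n, ((fun k => r (f k)) (i+1) - (fun k => r (f k)) i) from rfl,
          Finset.sum_range_sub (fun k => r (f k)), hf0]


lemma lemC (he : 1 < e) (hL : 0 ≤ L) (hzero : ∀ u, Ξ u u = 0)
    (hδ : ∀ s u t, a ≤ s → s ≤ u → u ≤ t → t ≤ b →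
      ‖Ξ s t - Ξ s u - Ξ u t‖ ≤ L * (t - s) ^ e)
    (s t : ℝ) (hs : a ≤ s) (ht : t ≤ b)
    (n : ℕ) (p : ℕ → ℝ) (hp : Monotone p) (hp0 : p 0 = s) (hpn : p n = t)
    (m : ℕ) (q : ℕ → ℝ) (hq : Monotone q) (hq0 : q 0 = s) (hqm : q m = t)
    (M₁ M₂ : ℝ) (hM₁ : 0 ≤ M₁) (hM₂ : 0 ≤ M₂)
    (hpmesh : ∀ i, i < n → p (i+1) - p i ≤ M₁)
    (hqmesh : ∀ i, i < m → q (i+1) - q i ≤ M₂) :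
    ‖RS Ξ p n - RS Ξ q m‖ ≤ L * sewK e * (M₁^(e-1) + M₂^(e-1)) * (t - s) := by
  classical
  set G : Finset ℝ := (Finset.range (n+1)).image p ∪ (Finset.range (m+1)).image q with hG
  have hsG : s ∈ G := by
    rw [hG]
    apply Finset.mem_union_left
    exact Finset.mem_image.mpr ⟨0, Finset.mem_range.mpr (by omega), hp0⟩
  have htG : t ∈ G := by
    rw [hG]
    apply Finset.mem_union_left
    exact Finset.mem_image.mpr ⟨n, Finset.mem_range.mpr (by omega), hpn⟩
  have hGmem : ∀ x ∈ G, s ≤ x ∧ x ≤ t := by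
    intro x hx
    rw [hG, Finset.mem_union] at hx
    rcases hx with hx | hx
    · obtain ⟨i, hi, rfl⟩ := Finset.mem_image.mp hx
      rw [Finset.mem_range] at hi
      exact ⟨hp0 ▸ hp (Nat.zero_le i), hpn ▸ hp (by omega)⟩
    · obtain ⟨i, hi, rfl⟩ := Finset.mem_image.mp hx
      rw [Finset.mem_range] at hi
      exact ⟨hq0 ▸ hq (Nat.zero_le i), hqm ▸ hq (by omega)⟩
  have hGne : G.Nonempty := ⟨s, hsG⟩
  set N : ℕ := G.card - 1 with hN
  have hcard : G.card = N + 1 := by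
    have := Finset.card_pos.mpr hGne
    omega
  set r : ℕ → ℝ := fun k => G.orderEmbOfFin hcard ⟨min k N, by omega⟩ with hr
  have hrmono : Monotone r := by
    intro x y hxy
    exact (G.orderEmbOfFin hcard).monotone (by simp [Fin.mk_le_mk]; omega)
  have hr0 : r 0 = s := by
    rw [hr]
    simp only [Nat.zero_min]
    rw [Finset.orderEmbOfFin_zero hcard (by omega)]
    refine le_antisymm (Finset.min'_le _ s hsG) ?_
    exact (hGmem _ (G.min'_mem _)).1
  have hrN : r N = t := by
    rw [hr]
    simp only [Nat.min_self]
    have := Finset.orderEmbOfFin_last hcard (by omega)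
    simp only [Nat.add_sub_cancel] at this
    rw [this]
    refine le_antisymm (hGmem _ (G.max'_mem _)).2 (Finset.le_max' _ t htG)
  -- the key estimate for one partition against the merged one
  have key : ∀ (M : ℝ), 0 ≤ M → ∀ (k : ℕ) (w : ℕ → ℝ), Monotone w → w 0 = s → w k = t →
      (∀ i, i ≤ k → w i ∈ G) → (∀ i, i < k → w (i+1) - w i ≤ M) →
      ‖RS Ξ r N - RS Ξ w k‖ ≤ L * sewK e * M^(e-1) * (t - s) := by
    intro M hM k w hw hw0 hwk hwG hwmesh
    have hmem : ∀ i, w (min i k) ∈ G := fun i => hwG _ (Nat.min_le_right i k)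
    set f : ℕ → ℕ := fun i => ((G.orderIsoOfFin hcard).symm ⟨w (min i k), hmem i⟩ : Fin (N+1)).val
      with hf
    have hfmono : Monotone f := by
      intro x y hxy
      have h1 : w (min x k) ≤ w (min y k) := hw (by omega)
      have h2 : (⟨w (min x k), hmem x⟩ : {z // z ∈ G}) ≤ ⟨w (min y k), hmem y⟩ := h1
      exact (G.orderIsoOfFin hcard).symm.monotone h2
    have hrf : ∀ i, i ≤ k → r (f i) = w i := by
      intro i hi
      have hlt : f i < N + 1 := ((G.orderIsoOfFin hcard).symm ⟨w (min i k), hmem i⟩).isLt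
      have harg : (⟨min (f i) N, by omega⟩ : Fin (N+1))
          = (G.orderIsoOfFin hcard).symm ⟨w (min i k), hmem i⟩ := by
        apply Fin.ext
        show min (f i) N = f i
        omega
      calc r (f i) = (G.orderEmbOfFin hcard) ⟨min (f i) N, by omega⟩ := rfl
        _ = (G.orderEmbOfFin hcard) ((G.orderIsoOfFin hcard).symm ⟨w (min i k), hmem i⟩) := by
            rw [harg]
        _ = ((G.orderIsoOfFin hcard) ((G.orderIsoOfFin hcard).symm ⟨w (min i k), hmem i⟩) : ℝ) :=
            (Finset.coe_orderIsoOfFin_apply _ _ _).symm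
        _ = w i := by rw [OrderIso.apply_symm_apply]; simp [Nat.min_eq_left hi]
    have hf0 : f 0 = 0 := by
      have h1 : (G.orderIsoOfFin hcard) ⟨0, by omega⟩ = ⟨s, hsG⟩ := by
        apply Subtype.ext
        rw [Finset.coe_orderIsoOfFin_apply, Finset.orderEmbOfFin_zero hcard (by omega)]
        exact le_antisymm (Finset.min'_le _ s hsG) ((hGmem _ (G.min'_mem _)).1)
      have h2 : (⟨w (min 0 k), hmem 0⟩ : {z // z ∈ G}) = ⟨s, hsG⟩ := by
        apply Subtype.ext
        simpa using hw0
      rw [hf]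
      simp only [h2, ← h1, OrderIso.symm_apply_apply]
    have hfk : f k = N := by
      have h1 : (G.orderIsoOfFin hcard) ⟨N, by omega⟩ = ⟨t, htG⟩ := by
        apply Subtype.ext
        rw [Finset.coe_orderIsoOfFin_apply]
        have := Finset.orderEmbOfFin_last hcard (by omega)
        simp only [Nat.add_sub_cancel] at this
        rw [this]
        exact le_antisymm ((hGmem _ (G.max'_mem _)).2) (Finset.le_max' _ t htG)
      have h2 : (⟨w (min k k), hmem k⟩ : {z // z ∈ G}) = ⟨t, htG⟩ := by
        apply Subtype.ext
        simpa using hwk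
      rw [hf]
      simp only [h2, ← h1, OrderIso.symm_apply_apply]
    have hB := lemB Ξ he hL hzero hδ k f hfmono hf0 r hrmono
      (by rw [hr0]; exact hs) (by rw [hfk, hrN]; exact ht) M hM
      (by
        intro i hi
        rw [hrf (i+1) (by omega), hrf i (by omega)]
        exact hwmesh i hi)
    rw [hfk, hr0] at hB
    have hsum : ∑ i ∈ range k, Ξ (r (f i)) (r (f (i+1)))
        = RS Ξ w k := by
      apply Finset.sum_congr rfl
      intro i hi
      rw [Finset.mem_range] at hi
      rw [hrf i (by omega), hrf (i+1) (by omega)]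
    rw [hsum] at hB
    calc ‖RS Ξ r N - RS Ξ w k‖ ≤ L * sewK e * M^(e-1) * (r N - s) := hB
      _ = L * sewK e * M^(e-1) * (t - s) := by rw [hrN]
  have hkey1 := key M₁ hM₁ n p hp hp0 hpn
    (fun i hi => by
      rw [hG]
      apply Finset.mem_union_left
      exact Finset.mem_image.mpr ⟨i, Finset.mem_range.mpr (by omega), rfl⟩) hpmesh
  have hkey2 := key M₂ hM₂ m q hq hq0 hqm
    (fun i hi => by
      rw [hG]
      apply Finset.mem_union_right
      exact Finset.mem_image.mpr ⟨i, Finset.mem_range.mpr (by omega), rfl⟩) hqmesh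
  calc ‖RS Ξ p n - RS Ξ q m‖
      = ‖(RS Ξ r N - RS Ξ q m) - (RS Ξ r N - RS Ξ p n)‖ := by
        congr 1; abel
    _ ≤ ‖RS Ξ r N - RS Ξ q m‖ + ‖RS Ξ r N - RS Ξ p n‖ := norm_sub_le _ _
    _ ≤ L * sewK e * M₂^(e-1) * (t - s) + L * sewK e * M₁^(e-1) * (t - s) :=
        add_le_add hkey2 hkey1
    _ = L * sewK e * (M₁^(e-1) + M₂^(e-1)) * (t - s) := by ring


/-- Uniform partition of `[a,t]` with `m` intervals. -/
def unif (a t : ℝ) (m k : ℕ) : ℝ := a + (t - a) * (min k m) / m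

lemma unif_mono {a t : ℝ} (hat : a ≤ t) (m : ℕ) : Monotone (unif a t m) := by
  intro x y hxy
  unfold unif
  rcases Nat.eq_zero_or_pos m with hm | hm
  · simp [hm]
  · have h1 : ((min x m : ℕ) : ℝ) ≤ ((min y m : ℕ) : ℝ) := by
      exact_mod_cast (by omega : min x m ≤ min y m)
    have hm' : (0:ℝ) < m := by exact_mod_cast hm
    have := sub_nonneg.mpr hat
    gcongr

lemma unif_zero (a t : ℝ) (m : ℕ) : unif a t m 0 = a := by simp [unif]

lemma unif_last (a t : ℝ) {m : ℕ} (hm : m ≠ 0) : unif a t m m = t := by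
  have hm' : (m:ℝ) ≠ 0 := by exact_mod_cast hm
  simp only [unif, min_self]; rw [mul_div_assoc, div_self hm', mul_one]; ring

lemma unif_mesh {a t : ℝ} (hat : a ≤ t) (m : ℕ) (k : ℕ) :
    unif a t m (k+1) - unif a t m k ≤ (t - a) / m := by
  rcases Nat.eq_zero_or_pos m with hm | hm
  · simp [hm, unif]
  · have hm' : (0:ℝ) < m := by exact_mod_cast hm
    have h1 : ((min (k+1) m : ℕ) : ℝ) ≤ ((min k m : ℕ) : ℝ) + 1 := by
      exact_mod_cast (by omega : min (k+1) m ≤ min k m + 1)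
    have h2 : unif a t m (k+1) - unif a t m k
        = (t - a) * (((min (k+1) m : ℕ) : ℝ) - ((min k m : ℕ) : ℝ)) / m := by
      unfold unif; ring
    rw [h2]
    have := sub_nonneg.mpr hat
    calc (t - a) * (((min (k+1) m : ℕ) : ℝ) - ((min k m : ℕ) : ℝ)) / m
        ≤ (t - a) * 1 / m := by gcongr; linarith
      _ = (t - a) / m := by ring

lemma unif_le {a t : ℝ} (hat : a ≤ t) (m : ℕ) (k : ℕ) (hm : m ≠ 0) :
    unif a t m k ≤ t := by
  have h1 : unif a t m k = unif a t m (min k m) := by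
    simp [unif, Nat.min_assoc]
  have h2 : unif a t m (min k m) ≤ unif a t m m := unif_mono hat m (Nat.min_le_right k m)
  rw [unif_last a t hm] at h2
  rw [h1]
  exact h2

theorem sewing (hab : a ≤ b) (he : 1 < e) (hL : 0 ≤ L)
    (hzero : ∀ u, Ξ u u = 0)
    (hδ : ∀ s u t, a ≤ s → s ≤ u → u ≤ t → t ≤ b →
      ‖Ξ s t - Ξ s u - Ξ u t‖ ≤ L * (t - s) ^ e) :
    ∃ I : ℝ → E, I a = 0 ∧
      (∀ s t, s ∈ Icc a b → t ∈ Icc a b → s ≤ t → IsRiemannLimit Ξ s t (I t - I s)) ∧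
      (∀ s t, s ∈ Icc a b → t ∈ Icc a b → s ≤ t →
        ‖(I t - I s) - Ξ s t‖ ≤ L * sewK e * (t - s) ^ e) := by
  have hK := sewK_pos he
  set g : ℝ → ℕ → E := fun t m => RS Ξ (unif a t m) m with hg
  -- mesh of uniform partitions tends to 0 (after rpow)
  have hrpow0 : ∀ c : ℝ, 0 ≤ c →
      Tendsto (fun m : ℕ => (c / m) ^ (e-1)) atTop (𝓝 0) := by
    intro c hc
    have h1 : Tendsto (fun m : ℕ => c / (m:ℝ)) atTop (𝓝 0) :=
      tendsto_const_div_atTop_nhds_zero_nat c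
    have h2 := (Real.continuousAt_rpow_const 0 (e-1) (Or.inr (by linarith))).tendsto.comp h1
    simpa [Function.comp_def, Real.zero_rpow (show e - 1 ≠ 0 by intro h; linarith)] using h2
  -- Cauchy property
  have hlim : ∀ t ∈ Icc a b, ∃ x, Tendsto (g t) atTop (𝓝 x) := by
    intro t ht
    apply cauchySeq_tendsto_of_complete
    rw [Metric.cauchySeq_iff]
    intro ε hε
    have hta : 0 ≤ t - a := by linarith [ht.1]
    have h0 : Tendsto (fun m : ℕ => L * sewK e * (((t-a) / m)^(e-1) + ((t-a) / m)^(e-1)) * (t-a))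
        atTop (𝓝 (L * sewK e * (0 + 0) * (t-a))) := by
      apply Tendsto.mul_const
      apply Tendsto.const_mul
      exact (hrpow0 _ hta).add (hrpow0 _ hta)
    rw [show L * sewK e * ((0:ℝ) + 0) * (t-a) = 0 by ring] at h0
    have hev := (h0.eventually (gt_mem_nhds hε)).and (eventually_ge_atTop 1)
    obtain ⟨N, hN⟩ := hev.exists
    refine ⟨N, fun m hm m' hm' => ?_⟩
    have hNm : (1:ℕ) ≤ N := hN.2
    have hmesh : ∀ m'' : ℕ, N ≤ m'' → ∀ i, i < m'' →
        unif a t m'' (i+1) - unif a t m'' i ≤ (t-a)/N := by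
      intro m'' hm'' i _
      refine (unif_mesh (by linarith [ht.1]) m'' i).trans ?_
      apply div_le_div_of_nonneg_left hta (by positivity)
      exact_mod_cast hm''
    rw [dist_eq_norm]
    calc ‖g t m - g t m'‖
        ≤ L * sewK e * (((t-a)/N)^(e-1) + ((t-a)/N)^(e-1)) * (t - a) := by
          apply lemC Ξ he hL hzero hδ a t (le_refl a) ht.2 m (unif a t m)
            (unif_mono (by linarith [ht.1]) m) (unif_zero a t m)
            (unif_last a t (by omega)) m' (unif a t m')
            (unif_mono (by linarith [ht.1]) m') (unif_zero a t m')
            (unif_last a t (by omega)) _ _ (by positivity) (by positivity)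
            (hmesh m hm) (hmesh m' hm')
      _ < ε := hN.1
  classical
  set I : ℝ → E := fun t => if h : t ∈ Icc a b then (hlim t h).choose else 0 with hI
  have htendI : ∀ t ∈ Icc a b, Tendsto (g t) atTop (𝓝 (I t)) := by
    intro t ht
    rw [hI]
    simp only [dif_pos ht]
    exact (hlim t ht).choose_spec
  have hIa : I a = 0 := by
    have h1 : g a = fun _ => 0 := by
      funext m
      have : ∀ k, unif a a m k = a := by intro k; simp [unif]
      simp [hg, RS, this, hzero]
    have h2 := htendI a ⟨le_rfl, hab⟩
    rw [h1] at h2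
    exact tendsto_nhds_unique h2 tendsto_const_nhds
  -- the master estimate for arbitrary partitions
  have lemE : ∀ s t, s ∈ Icc a b → t ∈ Icc a b → s ≤ t → ∀ M : ℝ, 0 < M →
      ∀ (n : ℕ) (p : ℕ → ℝ), Monotone p → p 0 = s → p n = t →
      (∀ i, i < n → p (i+1) - p i ≤ M) →
      ‖(I t - I s) - RS Ξ p n‖ ≤ L * sewK e * M^(e-1) * (t - a) := by
    intro s t hs ht hst M hM n p hp hp0 hpn hmesh
    have has : a ≤ s := hs.1
    have hta : 0 ≤ t - a := by linarith [ht.1]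
    have hsa : 0 ≤ s - a := by linarith
    -- step 1: fixed m', m → ∞
    have step1 : ∀ m' : ℕ, 1 ≤ m' → ‖(I s + RS Ξ p n) - g t m'‖
        ≤ L * sewK e * (M^(e-1) + ((t-a)/m')^(e-1)) * (t - a) := by
      intro m' hm'
      have hcmp : ∀ m : ℕ, 1 ≤ m → (s-a)/m ≤ M →
          ‖(g s m + RS Ξ p n) - g t m'‖
            ≤ L * sewK e * (M^(e-1) + ((t-a)/m')^(e-1)) * (t - a) := by
        intro m hm hsm
        set c : ℕ → ℝ := fun k => if k < m then unif a s m k else p (k - m) with hc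
        have hck : ∀ k, m ≤ k → c k = p (k - m) := by
          intro k hk; simp only [hc]; rw [if_neg (by omega)]
        have hcmono : Monotone c := by
          apply monotone_nat_of_le_succ
          intro k
          simp only [hc]
          by_cases h1 : k + 1 < m
          · rw [if_pos (by omega), if_pos h1]
            exact unif_mono (by linarith) m (by omega)
          · by_cases h2 : k < m
            · rw [if_pos h2, if_neg h1]
              have hk : k + 1 - m = 0 := by omega
              rw [hk, hp0]
              exact unif_le (by linarith) m k (by omega)
            · rw [if_neg h2, if_neg h1]
              exact hp (by omega)
        have hc0 : c 0 = a := by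
          simp only [hc]; rw [if_pos (by omega)]; exact unif_zero a s m
        have hclast : c (m + n) = t := by
          rw [hck (m+n) (by omega)]
          simp [hpn]
        have hcmesh : ∀ k, k < m + n → c (k+1) - c k ≤ M := by
          intro k hk
          by_cases h1 : k + 1 < m
          · simp only [hc]
            rw [if_pos h1, if_pos (show k < m by omega)]
            exact (unif_mesh (by linarith) m k).trans hsm
          · by_cases h2 : k < m
            · have hkm : k + 1 = m := by omega
              simp only [hc]
              rw [if_pos h2, if_neg (by omega)]
              have : k + 1 - m = 0 := by omega
              rw [this, hp0]
              have h3 := unif_mesh (show a ≤ s by linarith) m k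
              rw [show k + 1 = m from hkm, unif_last a s (show m ≠ 0 by omega)] at h3
              exact h3.trans hsm
            · rw [hck (k+1) (by omega), hck k (by omega)]
              have : k + 1 - m = (k - m) + 1 := by omega
              rw [this]
              exact hmesh (k-m) (by omega)
        have hcsplit : RS Ξ c (m + n) = g s m + RS Ξ p n := by
          rw [RS, Finset.range_eq_Ico,
            ← Finset.sum_Ico_consecutive (fun k => Ξ (c k) (c (k+1)))
              (Nat.zero_le m) (by omega : m ≤ m + n)]
          congr 1
          · have hgs : g s m = ∑ k ∈ Finset.Ico 0 m, Ξ (unif a s m k) (unif a s m (k+1)) := by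
              simp only [hg, RS, Finset.range_eq_Ico]
            rw [hgs]
            apply Finset.sum_congr rfl
            intro k hk
            have hk' : k < m := (Finset.mem_Ico.mp hk).2
            have e1 : c k = unif a s m k := by
              simp only [hc]; rw [if_pos hk']
            have e2 : c (k+1) = unif a s m (k+1) := by
              by_cases h1 : k + 1 < m
              · simp only [hc]; rw [if_pos h1]
              · have : k + 1 = m := by omega
                rw [hck (k+1) (by omega), this]
                simp [hp0, unif_last a s (show m ≠ 0 by omega)]
            rw [e1, e2]
          · rw [Finset.sum_Ico_eq_sum_range, RS]
            have : m + n - m = n := by omega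
            rw [this]
            apply Finset.sum_congr rfl
            intro k hk
            rw [hck (m+k) (by omega), hck (m+k+1) (by omega)]
            congr 2 <;> omega
        have := lemC Ξ he hL hzero hδ a t (le_refl a) ht.2
          (m+n) c hcmono hc0 hclast m' (unif a t m')
          (unif_mono (by linarith) m') (unif_zero a t m')
          (unif_last a t (by omega)) M ((t-a)/m') (le_of_lt hM) (by positivity)
          hcmesh (fun i _ => unif_mesh (by linarith) m' i)
        rw [hcsplit] at this
        exact this
      have htd : Tendsto (fun m : ℕ => ‖(g s m + RS Ξ p n) - g t m'‖) atTop
          (𝓝 ‖(I s + RS Ξ p n) - g t m'‖) :=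
        (((htendI s hs).add_const (RS Ξ p n)).sub_const (g t m')).norm
      apply le_of_tendsto htd
      have hev1 : ∀ᶠ m : ℕ in atTop, (s-a)/(m:ℝ) ≤ M := by
        have := (tendsto_const_div_atTop_nhds_zero_nat (s-a)).eventually
          (ge_mem_nhds hM)
        simpa using this
      filter_upwards [hev1, eventually_ge_atTop 1] with m h1 h2
      exact hcmp m h2 h1
    -- step 2: m' → ∞
    have htd2 : Tendsto (fun m' : ℕ => ‖(I s + RS Ξ p n) - g t m'‖) atTop
        (𝓝 ‖(I s + RS Ξ p n) - I t‖) :=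
      ((htendI t ht).const_sub (I s + RS Ξ p n)).norm
    have hrhs : Tendsto (fun m' : ℕ => L * sewK e * (M^(e-1) + ((t-a)/m')^(e-1)) * (t - a))
        atTop (𝓝 (L * sewK e * (M^(e-1) + 0) * (t - a))) := by
      apply Tendsto.mul_const
      apply Tendsto.const_mul
      exact tendsto_const_nhds.add (hrpow0 _ hta)
    have key : ‖(I s + RS Ξ p n) - I t‖ ≤ L * sewK e * (M^(e-1) + 0) * (t - a) := by
      refine le_of_tendsto_of_tendsto htd2 hrhs ?_
      filter_upwards [eventually_ge_atTop 1] with m' hm'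
      exact step1 m' hm'
    rw [show (I t - I s) - RS Ξ p n = -((I s + RS Ξ p n) - I t) by abel, norm_neg]
    calc ‖(I s + RS Ξ p n) - I t‖ ≤ L * sewK e * (M^(e-1) + 0) * (t - a) := key
      _ = L * sewK e * M^(e-1) * (t - a) := by ring
  refine ⟨I, hIa, ?_, ?_⟩
  · -- Riemann limit
    intro s t hs ht hst ε hε
    set B : ℝ := L * sewK e * (b - a) with hB
    have hB0 : 0 ≤ B := by
      have : (0:ℝ) ≤ b - a := by linarith
      positivity
    obtain ⟨δ, hδpos, hδpow⟩ : ∃ δ : ℝ, 0 < δ ∧ δ ^ (e-1) = ε/(B+1) :=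
      ⟨(ε/(B+1)) ^ ((e-1)⁻¹), Real.rpow_pos_of_pos (by positivity) _, by
        rw [← Real.rpow_mul (by positivity), inv_mul_cancel₀
          (show e-1 ≠ 0 by intro h; linarith), Real.rpow_one]⟩
    refine ⟨δ, hδpos, ?_⟩
    intro n σ hσ hσ0 hσlast hσmesh
    set p : ℕ → ℝ := fun k => σ ⟨min k n, by omega⟩ with hpdef
    have hpmono : Monotone p := by
      intro x y hxy
      exact hσ (by simp [Fin.mk_le_mk]; omega)
    have hp0 : p 0 = s := by
      rw [hpdef]
      simp only
      rw [show (⟨min 0 n, by omega⟩ : Fin (n+1)) = 0 from Fin.ext (by simp)]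
      exact hσ0
    have hpn : p n = t := by
      rw [hpdef]
      simp only
      rw [show (⟨min n n, by omega⟩ : Fin (n+1)) = Fin.last n from Fin.ext (by simp [Fin.last])]
      exact hσlast
    have hpmesh : ∀ i, i < n → p (i+1) - p i ≤ δ := by
      intro i hi
      have h1 : p (i+1) = σ (⟨i, hi⟩ : Fin n).succ := by
        rw [hpdef]; simp only; congr 1
        exact Fin.ext (Nat.min_eq_left (by omega) : min (i+1) n = i+1)
      have h2 : p i = σ (⟨i, hi⟩ : Fin n).castSucc := by
        rw [hpdef]; simp only; congr 1
        exact Fin.ext (Nat.min_eq_left (by omega) : min i n = i)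
      rw [h1, h2]
      exact le_of_lt (hσmesh ⟨i, hi⟩)
    have hsum : ∑ i : Fin n, Ξ (σ i.castSucc) (σ i.succ) = RS Ξ p n := by
      rw [RS, ← Fin.sum_univ_eq_sum_range (fun j => Ξ (p j) (p (j+1))) n]
      apply Finset.sum_congr rfl
      intro i _
      have hilt : i.val < n := i.isLt
      have h1 : p i.val = σ i.castSucc := by
        rw [hpdef]; simp only; congr 1
        exact Fin.ext (Nat.min_eq_left (by omega) : min i.val n = i.val)
      have h2 : p (i.val+1) = σ i.succ := by
        rw [hpdef]; simp only; congr 1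
        exact Fin.ext (Nat.min_eq_left (by omega) : min (i.val+1) n = i.val+1)
      rw [h1, h2]
    rw [hsum]
    have hE := lemE s t hs ht hst δ hδpos n p hpmono hp0 hpn hpmesh
    have hta : 0 ≤ t - a := by linarith [hs.1]
    have h1 : L * sewK e * (t - a) ≤ B := by
      rw [hB]
      have h2 : t - a ≤ b - a := by linarith [ht.2]
      have h3 : (0:ℝ) ≤ L * sewK e := by positivity
      exact mul_le_mul_of_nonneg_left h2 h3
    calc ‖RS Ξ p n - (I t - I s)‖ = ‖(I t - I s) - RS Ξ p n‖ := norm_sub_rev _ _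
      _ ≤ L * sewK e * δ^(e-1) * (t - a) := hE
      _ = (L * sewK e * (t - a)) * (ε/(B+1)) := by rw [hδpow]; ring
      _ ≤ B * (ε/(B+1)) := mul_le_mul_of_nonneg_right h1 (by positivity)
      _ < ε := by
          rw [mul_div_assoc', div_lt_iff₀ (by positivity : (0:ℝ) < B + 1)]
          nlinarith
  · -- the sewing bound
    intro s t hs ht hst
    refine le_of_forall_pos_le_add ?_
    intro η hη
    set B : ℝ := L * sewK e * (b - a) with hB
    have hB0 : 0 ≤ B := by
      have : (0:ℝ) ≤ b - a := by linarith
      positivity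
    obtain ⟨M, hMpos, hMpow⟩ : ∃ M : ℝ, 0 < M ∧ M ^ (e-1) = η/(B+1) :=
      ⟨(η/(B+1)) ^ ((e-1)⁻¹), Real.rpow_pos_of_pos (by positivity) _, by
        rw [← Real.rpow_mul (by positivity), inv_mul_cancel₀
          (show e-1 ≠ 0 by intro h; linarith), Real.rpow_one]⟩
    have hts : 0 ≤ t - s := by linarith
    obtain ⟨m, hm1, hmM⟩ : ∃ m : ℕ, 1 ≤ m ∧ (t-s)/m ≤ M := by
      refine ⟨max 1 ⌈(t-s)/M⌉₊, le_max_left _ _, ?_⟩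
      have h1 : (t-s)/M ≤ (⌈(t-s)/M⌉₊ : ℝ) := Nat.le_ceil _
      have h2 : ((⌈(t-s)/M⌉₊ : ℕ) : ℝ) ≤ ((max 1 ⌈(t-s)/M⌉₊ : ℕ):ℝ) := by
        exact_mod_cast le_max_right 1 ⌈(t-s)/M⌉₊
      have h3 : t - s ≤ ((max 1 ⌈(t-s)/M⌉₊ : ℕ):ℝ) * M := (div_le_iff₀ hMpos).mp (h1.trans h2)
      rw [div_le_iff₀ (by positivity : (0:ℝ) < ((max 1 ⌈(t-s)/M⌉₊ : ℕ):ℝ))]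
      linarith
    set p : ℕ → ℝ := unif s t m with hpdef
    have hp0 : p 0 = s := unif_zero s t m
    have hpm : p m = t := unif_last s t (by omega)
    have hE := lemE s t hs ht hst M hMpos m p (unif_mono hst m) hp0 hpm
      (fun i _ => (unif_mesh hst m i).trans hmM)
    have hA := lemA' Ξ he hL hzero hδ m p (unif_mono hst m)
      (by rw [hp0]; exact hs.1) (by rw [hpm]; exact ht.2)
    rw [hp0, hpm] at hA
    have hta : 0 ≤ t - a := by linarith [hs.1]
    have h1 : L * sewK e * M^(e-1) * (t-a) ≤ η := by
      have h2 : L * sewK e * (t - a) ≤ B := by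
        rw [hB]
        exact mul_le_mul_of_nonneg_left (by linarith [ht.2]) (by positivity)
      calc L * sewK e * M^(e-1) * (t-a) = (L * sewK e * (t-a)) * (η/(B+1)) := by
            rw [hMpow]; ring
        _ ≤ B * (η/(B+1)) := mul_le_mul_of_nonneg_right h2 (by positivity)
        _ ≤ η := by
            rw [mul_div_assoc', div_le_iff₀ (by positivity : (0:ℝ) < B + 1)]
            nlinarith
    calc ‖(I t - I s) - Ξ s t‖
        ≤ ‖(I t - I s) - RS Ξ p m‖ + ‖RS Ξ p m - Ξ s t‖ := by
          rw [show (I t - I s) - Ξ s t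
              = ((I t - I s) - RS Ξ p m) + (RS Ξ p m - Ξ s t) by abel]
          exact norm_add_le _ _
      _ ≤ L * sewK e * M^(e-1) * (t-a) + L * sewK e * (t-s)^e := add_le_add hE hA
      _ ≤ L * sewK e * (t - s)^e + η := by linarith


end Abstract

open scoped RealInnerProductSpace

/-- **Measure-dependent nonlinear Young integral (sewing).** Under the time-Hölder and
spatial-Lipschitz bounds on `Γ`, for any β-Hölder measure flow and β-Hölder path with
`γ + β > 1`, the Riemann sums of `(Γ_{u,v} ∗ μ_u)(Y_u)` converge, and the sewing error
estimate holds with a constant depending only on `γ, β` and the bound on `Γ`. -/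
theorem stmt4 (d : ℕ) (γ β C : ℝ) (hγ : γ ∈ Ioo (1/2 : ℝ) 1) (hβ : 0 < β)
    (hγβ : 1 < γ + β) (hC : 0 < C) :
    ∃ C' > (0:ℝ), ∀ T > (0:ℝ), ∀ Γ : ℝ → Ed d → Ed d,
      (∀ s ∈ Icc (0:ℝ) T, ∀ t ∈ Icc (0:ℝ) T, ∀ x : Ed d,
        ‖Γ t x - Γ s x‖ ≤ C * |t - s| ^ γ) →
      (∀ s ∈ Icc (0:ℝ) T, ∀ t ∈ Icc (0:ℝ) T, ∀ x y : Ed d,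
        ‖(Γ t x - Γ s x) - (Γ t y - Γ s y)‖ ≤ C * |t - s| ^ γ * ‖x - y‖) →
      ∀ μf : ℝ → Measure (Ed d),
      (∀ t ∈ Icc (0:ℝ) T, IsProbabilityMeasure (μf t)) →
      (∀ t ∈ Icc (0:ℝ) T, ∫⁻ y, ENNReal.ofReal ‖y‖ ∂(μf t) < ⊤) →
      ∀ Mμ ≥ (0:ℝ), ∀ MY ≥ (0:ℝ),
      (∀ s ∈ Icc (0:ℝ) T, ∀ t ∈ Icc (0:ℝ) T, ∀ φ : Ed d → ℝ, LipschitzWith 1 φ →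
        (∫ x, φ x ∂(μf t)) - (∫ x, φ x ∂(μf s)) ≤ Mμ * |t - s| ^ β) →
      ∀ Y : ℝ → Ed d,
      (∀ u ∈ Icc (0:ℝ) T, ∀ v ∈ Icc (0:ℝ) T, ‖Y v - Y u‖ ≤ MY * |v - u| ^ β) →
      ∃ I : ℝ → Ed d, I 0 = 0 ∧
        (∀ s ∈ Icc (0:ℝ) T, ∀ t ∈ Icc (0:ℝ) T, s ≤ t →
          IsRiemannLimit (fun u v => convInc Γ u v (μf u) (Y u)) s t (I t - I s)) ∧
        (∀ s ∈ Icc (0:ℝ) T, ∀ t ∈ Icc (0:ℝ) T, s ≤ t →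
          ‖(I t - I s) - convInc Γ s t (μf s) (Y s)‖
            ≤ C' * |t - s| ^ (γ + β) * (MY + Mμ)) := by
  obtain ⟨hγ0, hγ1⟩ := hγ
  have hγpos : 0 < γ := by linarith
  have hK := sewK_pos hγβ
  refine ⟨C * sewK (γ + β), by positivity, ?_⟩
  intro T hT Γ hΓt hΓx μf hprob _hmom Mμ hMμ MY hMY hμ Y hY
  set Ξ : ℝ → ℝ → Ed d := fun u v => convInc Γ u v (μf u) (Y u) with hΞ
  have hzero : ∀ u, Ξ u u = 0 := by intro u; simp [hΞ, convInc]
  set L : ℝ := C * (MY + Mμ) with hL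
  have hL0 : 0 ≤ L := by positivity
  -- integrability of the increments against probability measures
  have hint : ∀ s' ∈ Icc (0:ℝ) T, ∀ t' ∈ Icc (0:ℝ) T, ∀ z : Ed d,
      ∀ ν : Measure (Ed d), IsProbabilityMeasure ν →
      Integrable (fun y => Γ t' (z - y) - Γ s' (z - y)) ν := by
    intro s' hs' t' ht' z ν hν
    haveI := hν
    have hlip : LipschitzWith (C * |t' - s'| ^ γ).toNNReal (fun x => Γ t' x - Γ s' x) := by
      apply LipschitzWith.of_dist_le_mul
      intro x y
      rw [dist_eq_norm, dist_eq_norm]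
      refine (hΓx s' hs' t' ht' x y).trans ?_
      apply mul_le_mul_of_nonneg_right ?_ (norm_nonneg _)
      rw [Real.coe_toNNReal']
      exact le_max_left _ _
    have hcont : Continuous (fun y : Ed d => Γ t' (z - y) - Γ s' (z - y)) :=
      hlip.continuous.comp (continuous_const.sub continuous_id)
    apply Integrable.mono' (integrable_const (C * |t' - s'| ^ γ))
    · exact hcont.aestronglyMeasurable
    · exact ae_of_all _ (fun y => hΓt s' hs' t' ht' (z - y))
  -- the sewing estimate
  have hδ : ∀ s u t, (0:ℝ) ≤ s → s ≤ u → u ≤ t → t ≤ T →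
      ‖Ξ s t - Ξ s u - Ξ u t‖ ≤ L * (t - s) ^ (γ + β) := by
    intro s u t h0s hsu hut htT
    have hsI : s ∈ Icc (0:ℝ) T := ⟨h0s, by linarith⟩
    have huI : u ∈ Icc (0:ℝ) T := ⟨by linarith, by linarith⟩
    have htI : t ∈ Icc (0:ℝ) T := ⟨by linarith, by linarith⟩
    have hts0 : (0:ℝ) ≤ t - s := by linarith
    rcases eq_or_lt_of_le hut with heq | hlt
    · rw [← heq, hzero u, sub_zero, show Ξ s u - Ξ s u = 0 by abel, norm_zero]
      exact mul_nonneg hL0 (Real.rpow_nonneg (by linarith) _)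
    · haveI hps := hprob s hsI
      haveI hpu := hprob u huI
      set D : Ed d → Ed d := fun x => Γ t x - Γ u x with hD
      have hDb : ∀ x, ‖D x‖ ≤ C * (t - u) ^ γ := by
        intro x
        have := hΓt u huI t htI x
        rwa [abs_of_nonneg (by linarith)] at this
      have hDl : ∀ x y, ‖D x - D y‖ ≤ C * (t - u) ^ γ * ‖x - y‖ := by
        intro x y
        have := hΓx u huI t htI x y
        rwa [abs_of_nonneg (by linarith)] at this
      have i1 : Integrable (fun y => Γ t (Y s - y) - Γ s (Y s - y)) (μf s) :=
        hint s hsI t htI (Y s) _ hps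
      have i2 : Integrable (fun y => Γ u (Y s - y) - Γ s (Y s - y)) (μf s) :=
        hint s hsI u huI (Y s) _ hps
      have i3 : Integrable (fun y => D (Y s - y)) (μf s) := hint u huI t htI (Y s) _ hps
      have i4 : Integrable (fun y => D (Y u - y)) (μf s) := hint u huI t htI (Y u) _ hps
      have i5 : Integrable (fun y => D (Y u - y)) (μf u) := hint u huI t htI (Y u) _ hpu
      have key1 : Ξ s t - Ξ s u = ∫ y, D (Y s - y) ∂(μf s) := by
        have h1 : Ξ s t - Ξ s u
            = ∫ y, ((Γ t (Y s - y) - Γ s (Y s - y)) - (Γ u (Y s - y) - Γ s (Y s - y))) ∂(μf s) :=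
          (integral_sub i1 i2).symm
        rw [h1]
        congr 1
        funext y
        simp only [hD]
        abel
      have decomp : Ξ s t - Ξ s u - Ξ u t
          = (∫ y, (D (Y s - y) - D (Y u - y)) ∂(μf s))
            + ((∫ y, D (Y u - y) ∂(μf s)) - ∫ y, D (Y u - y) ∂(μf u)) := by
        have h2 : Ξ u t = ∫ y, D (Y u - y) ∂(μf u) := rfl
        rw [key1, h2, integral_sub i3 i4]
        abel
      -- first term
      have bound1 : ‖∫ y, (D (Y s - y) - D (Y u - y)) ∂(μf s)‖
          ≤ C * (t - u) ^ γ * (MY * (u - s) ^ β) := by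
        have hptw : ∀ y, ‖D (Y s - y) - D (Y u - y)‖ ≤ C * (t - u) ^ γ * (MY * (u - s) ^ β) := by
          intro y
          refine (hDl _ _).trans ?_
          have h3 : Y s - y - (Y u - y) = Y s - Y u := by abel
          rw [h3]
          apply mul_le_mul_of_nonneg_left ?_
            (mul_nonneg hC.le (Real.rpow_nonneg (by linarith) _))
          have := hY u huI s hsI
          rwa [abs_of_nonpos (by linarith), neg_sub] at this
        have := norm_integral_le_of_norm_le_const (μ := μf s) (ae_of_all _ hptw)
        simpa [measure_univ] using this
      -- second term
      have bound2 : ‖(∫ y, D (Y u - y) ∂(μf s)) - ∫ y, D (Y u - y) ∂(μf u)‖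
          ≤ C * (t - u) ^ γ * (Mμ * (u - s) ^ β) := by
        set v : Ed d := (∫ y, D (Y u - y) ∂(μf s)) - ∫ y, D (Y u - y) ∂(μf u) with hv
        by_cases hv0 : v = 0
        · rw [hv0, norm_zero]
          exact mul_nonneg (mul_nonneg hC.le (Real.rpow_nonneg (by linarith) _))
            (mul_nonneg hMμ (Real.rpow_nonneg (by linarith) _))
        · set c : ℝ := C * (t - u) ^ γ with hc
          have hcpos : 0 < c := by
            have : (0:ℝ) < (t - u) ^ γ := Real.rpow_pos_of_pos (by linarith) γ
            positivity
          set e0 : Ed d := (‖v‖⁻¹ : ℝ) • v with he0def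
          have he0 : ‖e0‖ = 1 := norm_smul_inv_norm hv0
          set φ : Ed d → ℝ := fun y => c⁻¹ * ⟪e0, D (Y u - y)⟫ with hφ
          have hφlip : LipschitzWith 1 φ := by
            apply LipschitzWith.of_dist_le_mul
            intro y y'
            rw [Real.dist_eq, dist_eq_norm]
            have h4 : φ y - φ y' = c⁻¹ * ⟪e0, D (Y u - y) - D (Y u - y')⟫ := by
              rw [hφ]; simp only [inner_sub_right]; ring
            rw [h4, abs_mul, abs_of_nonneg (by positivity : (0:ℝ) ≤ c⁻¹)]
            have h5 : |⟪e0, D (Y u - y) - D (Y u - y')⟫| ≤ ‖D (Y u - y) - D (Y u - y')‖ := by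
              have := abs_real_inner_le_norm e0 (D (Y u - y) - D (Y u - y'))
              rwa [he0, one_mul] at this
            have h6 : ‖D (Y u - y) - D (Y u - y')‖ ≤ c * ‖y - y'‖ := by
              have := hDl (Y u - y) (Y u - y')
              have h7 : Y u - y - (Y u - y') = y' - y := by abel
              rw [h7, norm_sub_rev y' y] at this
              exact this
            calc c⁻¹ * |⟪e0, D (Y u - y) - D (Y u - y')⟫| ≤ c⁻¹ * (c * ‖y - y'‖) := by
                  apply mul_le_mul_of_nonneg_left (h5.trans h6) (by positivity)
              _ = ‖y - y'‖ := by field_simp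
              _ = 1 * ‖y - y'‖ := by ring
          have hin : ∀ ν : Measure (Ed d), IsProbabilityMeasure ν →
              ∫ y, φ y ∂ν = c⁻¹ * ⟪e0, ∫ y, D (Y u - y) ∂ν⟫ := by
            intro ν hν
            haveI := hν
            rw [hφ]
            rw [integral_const_mul c⁻¹ (fun y => ⟪e0, D (Y u - y)⟫)]
            congr 1
            exact integral_inner (hint u huI t htI (Y u) ν hν) e0
          have hnv : ‖v‖ = ⟪e0, v⟫ := by
            rw [he0def, real_inner_smul_left, real_inner_self_eq_norm_sq]
            have hvne : ‖v‖ ≠ 0 := norm_ne_zero_iff.mpr hv0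
            field_simp
          have hfin : ⟪e0, v⟫ ≤ c * (Mμ * (u - s) ^ β) := by
            have h8 : ⟪e0, v⟫ = c * ((∫ y, φ y ∂(μf s)) - ∫ y, φ y ∂(μf u)) := by
              rw [hv, inner_sub_right, hin _ hps, hin _ hpu]
              field_simp
            rw [h8]
            apply mul_le_mul_of_nonneg_left ?_ (le_of_lt hcpos)
            have := hμ u huI s hsI φ hφlip
            rwa [abs_of_nonpos (by linarith), neg_sub] at this
          rw [hnv]
          exact hfin.trans (by rw [hc])
      -- combine
      have hmono1 : (t - u) ^ γ ≤ (t - s) ^ γ :=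
        Real.rpow_le_rpow (by linarith) (by linarith) (le_of_lt hγpos)
      have hmono2 : (u - s) ^ β ≤ (t - s) ^ β :=
        Real.rpow_le_rpow (by linarith) (by linarith) (le_of_lt hβ)
      have hsplit : (t - s) ^ (γ + β) = (t - s) ^ γ * (t - s) ^ β :=
        Real.rpow_add' hts0 (by intro h; linarith)
      calc ‖Ξ s t - Ξ s u - Ξ u t‖
          ≤ ‖∫ y, (D (Y s - y) - D (Y u - y)) ∂(μf s)‖
            + ‖(∫ y, D (Y u - y) ∂(μf s)) - ∫ y, D (Y u - y) ∂(μf u)‖ := by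
            rw [decomp]; exact norm_add_le _ _
        _ ≤ C * (t - u) ^ γ * (MY * (u - s) ^ β) + C * (t - u) ^ γ * (Mμ * (u - s) ^ β) :=
            add_le_add bound1 bound2
        _ = C * (MY + Mμ) * ((t - u) ^ γ * (u - s) ^ β) := by ring
        _ ≤ C * (MY + Mμ) * ((t - s) ^ γ * (t - s) ^ β) := by
            apply mul_le_mul_of_nonneg_left ?_ (by positivity)
            apply mul_le_mul hmono1 hmono2 (Real.rpow_nonneg (by linarith) _)
              (Real.rpow_nonneg (by linarith) _)
        _ = L * (t - s) ^ (γ + β) := by rw [hsplit, hL]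
  obtain ⟨I, hI0, hRL, hbound⟩ := sewing Ξ (le_of_lt hT) hγβ hL0 hzero hδ
  refine ⟨I, hI0, ?_, ?_⟩
  · intro s hs t ht hst
    exact hRL s t hs ht hst
  · intro s hs t ht hst
    have h1 := hbound s t hs ht hst
    calc ‖(I t - I s) - convInc Γ s t (μf s) (Y s)‖
        ≤ L * sewK (γ + β) * (t - s) ^ (γ + β) := h1
      _ = C * sewK (γ + β) * |t - s| ^ (γ + β) * (MY + Mμ) := by
          rw [abs_of_nonneg (by linarith), hL]; ring
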